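/- Any homeomorphism of the circle supported in the interior of a proper closed interval $I \subsetneq \mathbb{S}^1$ can be written as a commutator $f = f_1 f_2 f_1^{-1} f_2^{-1}$ where $f_1, f_2$ are homeomorphisms of the circle supported in $I$. -/

import Mathlib

noncomputable section

/-- The circle `ℝ/ℤ`. -/
abbrev S1 : Type := AddCircle (1 : ℝ)

/-- The projection `ℝ → ℝ/ℤ`. -/
def pr : ℝ → S1 := fun x => (x : S1)

namespace Stmt13Aux
open Set Function

instance : Fact ((0:ℝ) < 1) := ⟨zero_lt_one⟩

abbrev std : Setoid ℝ := QuotientAddGroup.leftRel (AddSubgroup.zmultiples (1:ℝ))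

lemma continuous_pr : Continuous pr := AddCircle.continuous_mk' 1

lemma rel_iff {x y : ℝ} (h : std x y) : ∃ k : ℤ, y = x + k := by
  rw [QuotientAddGroup.leftRel_apply] at h
  obtain ⟨k, hk⟩ := h
  refine ⟨k, ?_⟩
  have : (k : ℝ) = -x + y := by simpa using hk
  linarith

lemma pr_add_int (z : ℝ) (k : ℤ) : pr (z + k) = pr z := by
  refine (QuotientAddGroup.eq_iff_sub_mem).mpr ?_
  simpa using ⟨k, by simp⟩

def coord (a : ℝ) (θ : S1) : ℝ := ((AddCircle.equivIco 1 a θ : Set.Ico a (a+1)) : ℝ)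

lemma coord_mem (a : ℝ) (θ : S1) : coord a θ ∈ Set.Ico a (a+1) :=
  (AddCircle.equivIco 1 a θ).2

lemma pr_coord (a : ℝ) (θ : S1) : pr (coord a θ) = θ :=
  (AddCircle.equivIco 1 a).symm_apply_apply θ

lemma coord_pr (a : ℝ) {y : ℝ} (hy : y ∈ Set.Ico a (a+1)) : coord a (pr y) = y := by
  have h1 : pr (coord a (pr y)) = pr y := pr_coord a (pr y)
  exact (AddCircle.coe_eq_coe_iff_of_mem_Ico (coord_mem a (pr y)) hy).mp h1

lemma coord_continuousAt (a : ℝ) {θ : S1} (hθ : θ ≠ pr a) : ContinuousAt (coord a) θ :=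
  continuousAt_subtype_val.comp (AddCircle.continuousAt_equivIco 1 a hθ)

/-- periodization of a map `H : ℝ → ℝ` that is identity outside `[a,b] ⊆ [a,a+1)`. -/
def tilde (a : ℝ) (H : ℝ → ℝ) (x : ℝ) : ℝ :=
  H (x - ⌊x - a⌋) + ⌊x - a⌋

lemma sub_floor_mem (a x : ℝ) : x - ⌊x - a⌋ ∈ Ico a (a + 1) := by
  constructor
  · have := Int.floor_le (x - a); linarith
  · have := Int.lt_floor_add_one (x - a); linarith

lemma tilde_eq_of_mem {a : ℝ} (H : ℝ → ℝ) {x : ℝ} (hx : x ∈ Ico a (a+1)) :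
    tilde a H x = H x := by
  have h0 : ⌊x - a⌋ = 0 := by
    rw [Int.floor_eq_zero_iff]
    constructor
    · linarith [hx.1]
    · have := hx.2; simp; linarith
  simp [tilde, h0]

lemma tilde_add_int (a : ℝ) (H : ℝ → ℝ) (x : ℝ) (k : ℤ) :
    tilde a H (x + k) = tilde a H x + k := by
  have h1 : x + (k:ℝ) - a = (x - a) + k := by ring
  have h2 : ⌊x + (k:ℝ) - a⌋ = ⌊x - a⌋ + k := by rw [h1, Int.floor_add_intCast]
  simp only [tilde, h2]
  push_cast
  ring_nf

section Descend
variable {a b : ℝ} (hab : a < b) (hb1 : b < a + 1)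

variable (H : ℝ ≃o ℝ) (hH : ∀ x ∉ Set.Ioo a b, H x = x)

include hab hb1 hH

lemma symm_id : ∀ x ∉ Set.Ioo a b, H.symm x = x := by
  intro x hx
  conv_lhs => rw [← hH x hx]
  exact H.symm_apply_apply x

lemma maps_Ico : ∀ x ∈ Ico a (a+1), H x ∈ Ico a (a+1) := by
  intro x hx
  have ha : H a = a := hH a (by simp)
  have hbb : H b = b := hH b (by simp)
  constructor
  · calc a = H a := ha.symm
    _ ≤ H x := H.monotone hx.1
  · by_cases hxb : x < b
    · have : H x < H b := H.strictMono hxb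
      rw [hbb] at this; linarith
    · rw [hH x (by intro h; exact hxb h.2)]; exact hx.2

lemma tilde_strictMono : StrictMono (tilde a H) := by
  intro x y hxy
  have hmn : ⌊x - a⌋ ≤ ⌊y - a⌋ := Int.floor_le_floor (by linarith)
  rcases eq_or_lt_of_le hmn with heq | hlt
  · have : x - ⌊x - a⌋ < y - ⌊y - a⌋ := by rw [← heq]; linarith
    have h2 := H.strictMono this
    have heqr : ((⌊x - a⌋ : ℤ) : ℝ) = ((⌊y - a⌋ : ℤ) : ℝ) := by exact_mod_cast heq
    unfold tilde
    linarith
  · have h1 : H (x - ⌊x - a⌋) < a + 1 :=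
      (maps_Ico hab hb1 H hH _ (sub_floor_mem a x)).2
    have h2 : a ≤ H (y - ⌊y - a⌋) :=
      (maps_Ico hab hb1 H hH _ (sub_floor_mem a y)).1
    have : (⌊x - a⌋ : ℝ) + 1 ≤ (⌊y - a⌋ : ℝ) := by exact_mod_cast hlt
    unfold tilde
    linarith

lemma tilde_surjective : Surjective (tilde a H) := by
  intro y
  set n := ⌊y - a⌋ with hn
  have hy0 : y - n ∈ Ico a (a+1) := sub_floor_mem a y
  set z := H.symm (y - n) with hz
  have hz0 : z ∈ Ico a (a+1) :=
    maps_Ico hab hb1 H.symm (symm_id hab hb1 H hH) _ hy0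
  refine ⟨z + n, ?_⟩
  rw [tilde_add_int, tilde_eq_of_mem _ hz0, hz, H.apply_symm_apply]
  ring

/-- tilde as an order isomorphism. -/
def tildeIso : ℝ ≃o ℝ :=
  StrictMono.orderIsoOfSurjective _ (tilde_strictMono hab hb1 H hH)
    (tilde_surjective hab hb1 H hH)

lemma continuous_tilde : Continuous (tilde a H) := by
  have := (tildeIso hab hb1 H hH).toHomeomorph.continuous
  exact this

lemma tilde_rel (x y : ℝ) (h : std x y) : pr (tilde a H x) = pr (tilde a H y) := by
  obtain ⟨k, rfl⟩ := rel_iff h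
  rw [tilde_add_int, pr_add_int]

lemma tilde_symm_tilde (x : ℝ) : tilde a H.symm (tilde a H x) = x := by
  set m := ⌊x - a⌋ with hm
  have hx0 : x - m ∈ Ico a (a+1) := sub_floor_mem a x
  have h1 : tilde a H x = H (x - m) + m := rfl
  have h2 : H (x - m) ∈ Ico a (a+1) := maps_Ico hab hb1 H hH _ hx0
  rw [h1, tilde_add_int, tilde_eq_of_mem _ h2, H.symm_apply_apply]
  ring

/-- Descend a homeomorphism of ℝ (identity outside `(a,b)`, `b < a+1`) to the circle. -/
def descend : S1 ≃ₜ S1 where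
  toFun θ := Quotient.liftOn' θ (fun x => pr (tilde a H x)) (tilde_rel hab hb1 H hH)
  invFun θ := Quotient.liftOn' θ (fun x => pr (tilde a H.symm x))
    (tilde_rel hab hb1 H.symm (symm_id hab hb1 H hH))
  left_inv θ := by
    induction θ using Quotient.inductionOn' with
    | h x =>
      show pr (tilde a H.symm (tilde a H x)) = pr x
      rw [tilde_symm_tilde hab hb1 H hH]
  right_inv θ := by
    induction θ using Quotient.inductionOn' with
    | h x =>
      show pr (tilde a H (tilde a H.symm x)) = pr x
      have := tilde_symm_tilde hab hb1 H.symm (symm_id hab hb1 H hH) x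
      rw [OrderIso.symm_symm] at this
      rw [this]
  continuous_toFun := Continuous.quotient_liftOn'
    (continuous_pr.comp (continuous_tilde hab hb1 H hH)) _
  continuous_invFun := Continuous.quotient_liftOn'
    (continuous_pr.comp (continuous_tilde hab hb1 H.symm (symm_id hab hb1 H hH))) _

lemma descend_apply (x : ℝ) : descend hab hb1 H hH (pr x) = pr (tilde a H x) := rfl

lemma descend_symm_apply (x : ℝ) :
    (descend hab hb1 H hH).symm (pr x) = pr (tilde a H.symm x) := rfl


lemma descend_support :
    closure {θ : S1 | descend hab hb1 H hH θ ≠ θ} ⊆ pr '' Set.Icc a b := by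
  have hclosed : IsClosed (pr '' Set.Icc a b) :=
    (isCompact_Icc.image continuous_pr).isClosed
  refine closure_minimal ?_ hclosed
  intro θ hθ
  set x := coord a θ with hx
  have hxm : x ∈ Ico a (a+1) := coord_mem a θ
  have hpr : pr x = θ := pr_coord a θ
  by_contra hmem
  have hxab : x ∉ Set.Icc a b := fun h => hmem ⟨x, h, hpr⟩
  have : descend hab hb1 H hH θ = θ := by
    conv_lhs => rw [← hpr]
    rw [descend_apply, tilde_eq_of_mem _ hxm,
      hH x (fun h => hxab ⟨le_of_lt h.1, le_of_lt h.2⟩), hpr]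
  exact hθ this

end Descend

section Core
variable (G FE : ℝ ≃o ℝ) (c d : ℝ)
variable (hcd : c ≤ d) (hGd : G d < c)
variable (hFEid : ∀ x ∉ Set.Icc c d, FE x = x) (hFEmem : ∀ x ∈ Set.Icc c d, FE x ∈ Set.Icc c d)

/-- the `n`-th piece `[Gⁿc, Gⁿd]`. -/
def P (n : ℕ) : Set ℝ := Set.Icc ((⇑G)^[n] c) ((⇑G)^[n] d)

open scoped Classical in
/-- the infinite-swindle homeomorphism `⊔ₙ Gⁿ FE G⁻ⁿ`. -/
def F1fun : ℝ → ℝ := fun x =>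
  if h : ∃ n, x ∈ P G c d n then (⇑G)^[h.choose] (FE ((⇑G.symm)^[h.choose] x)) else x

lemma Gsi_Gi (n : ℕ) (x : ℝ) : (⇑G.symm)^[n] ((⇑G)^[n] x) = x :=
  (Function.LeftInverse.iterate G.left_inv n) x

lemma Gi_Gsi (n : ℕ) (x : ℝ) : (⇑G)^[n] ((⇑G.symm)^[n] x) = x :=
  (Function.RightInverse.iterate G.right_inv n) x

include hcd hGd

lemma seq_anti : ∀ k l : ℕ, k ≤ l → (⇑G)^[l] d ≤ (⇑G)^[k] d := by
  have hdd : G d ≤ d := le_of_lt (lt_of_lt_of_le hGd hcd)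
  have key : ∀ k : ℕ, (⇑G)^[k+1] d ≤ (⇑G)^[k] d := by
    intro k
    rw [Function.iterate_succ_apply]
    exact (G.monotone.iterate k) hdd
  intro k l hkl
  exact antitone_nat_of_succ_le (f := fun k => (⇑G)^[k] d) key hkl

lemma seq_lt : ∀ m n : ℕ, m < n → (⇑G)^[n] d < (⇑G)^[m] c := by
  intro m n hmn
  have h1 : (⇑G)^[n] d ≤ (⇑G)^[m+1] d := seq_anti G c d hcd hGd _ _ hmn
  have h2 : (⇑G)^[m+1] d < (⇑G)^[m] c := by
    rw [Function.iterate_succ_apply]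
    exact (G.strictMono.iterate m) hGd
  exact lt_of_le_of_lt h1 h2

lemma piece_uniq {x : ℝ} {n m : ℕ} (hn : x ∈ P G c d n) (hm : x ∈ P G c d m) : n = m := by
  rcases lt_trichotomy n m with h | h | h
  · exact absurd (lt_of_le_of_lt hn.1 (lt_of_le_of_lt hm.2 (seq_lt G c d hcd hGd n m h)))
      (lt_irrefl _)
  · exact h
  · exact absurd (lt_of_le_of_lt hm.1 (lt_of_le_of_lt hn.2 (seq_lt G c d hcd hGd m n h)))
      (lt_irrefl _)

lemma F1_on {x : ℝ} {n : ℕ} (hx : x ∈ P G c d n) :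
    F1fun G FE c d x = (⇑G)^[n] (FE ((⇑G.symm)^[n] x)) := by
  have h : ∃ m, x ∈ P G c d m := ⟨n, hx⟩
  rw [F1fun, dif_pos h]
  rw [piece_uniq G c d hcd hGd h.choose_spec hx]

lemma F1_off {x : ℝ} (hx : ∀ n, x ∉ P G c d n) : F1fun G FE c d x = x := by
  rw [F1fun, dif_neg (by push_neg; exact fun n => hx n)]

lemma Gsi_mem {x : ℝ} {n : ℕ} (hx : x ∈ P G c d n) : (⇑G.symm)^[n] x ∈ Set.Icc c d := by
  constructor
  · have := (G.symm.monotone.iterate n) hx.1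
    rwa [Gsi_Gi] at this
  · have := (G.symm.monotone.iterate n) hx.2
    rwa [Gsi_Gi] at this

include hFEmem in
lemma F1_mem {x : ℝ} {n : ℕ} (hx : x ∈ P G c d n) : F1fun G FE c d x ∈ P G c d n := by
  rw [F1_on G FE c d hcd hGd hx]
  have hm := hFEmem _ (Gsi_mem G c d hcd hGd hx)
  exact ⟨(G.monotone.iterate n) hm.1, (G.monotone.iterate n) hm.2⟩

include hFEmem in
lemma F1_strictMono : StrictMono (F1fun G FE c d) := by
  intro x y hxy
  by_cases hx : ∃ n, x ∈ P G c d n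
  · obtain ⟨n, hxn⟩ := hx
    by_cases hy : ∃ m, y ∈ P G c d m
    · obtain ⟨m, hym⟩ := hy
      rcases lt_trichotomy n m with h | rfl | h
      · exact absurd (lt_of_le_of_lt hym.2 (lt_of_lt_of_le (seq_lt G c d hcd hGd n m h) hxn.1))
          (not_lt_of_gt hxy)
      · rw [F1_on G FE c d hcd hGd hxn, F1_on G FE c d hcd hGd hym]
        exact (G.strictMono.iterate n) (FE.strictMono ((G.symm.strictMono.iterate n) hxy))
      · -- m < n : piece of x entirely below piece of y
        have h1 : F1fun G FE c d x ≤ (⇑G)^[n] d :=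
          (F1_mem G FE c d hcd hGd hFEmem hxn).2
        have h2 : (⇑G)^[m] c ≤ F1fun G FE c d y :=
          (F1_mem G FE c d hcd hGd hFEmem hym).1
        exact lt_of_le_of_lt h1 (lt_of_lt_of_le (seq_lt G c d hcd hGd m n h) h2)
    · push_neg at hy
      rw [F1_off G FE c d hcd hGd hy]
      have h1 : F1fun G FE c d x ≤ (⇑G)^[n] d :=
        (F1_mem G FE c d hcd hGd hFEmem hxn).2
      have h2 : (⇑G)^[n] d < y := by
        rcases lt_or_ge ((⇑G)^[n] d) y with h | h
        · exact h
        · exact absurd ⟨le_of_lt (lt_of_le_of_lt hxn.1 hxy), h⟩ (hy n)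
      linarith
  · push_neg at hx
    rw [F1_off G FE c d hcd hGd hx]
    by_cases hy : ∃ m, y ∈ P G c d m
    · obtain ⟨m, hym⟩ := hy
      have h2 : (⇑G)^[m] c ≤ F1fun G FE c d y :=
        (F1_mem G FE c d hcd hGd hFEmem hym).1
      have h1 : x < (⇑G)^[m] c := by
        rcases lt_or_ge x ((⇑G)^[m] c) with h | h
        · exact h
        · exact absurd ⟨h, le_of_lt (lt_of_lt_of_le hxy hym.2)⟩ (hx m)
      linarith
    · push_neg at hy
      rw [F1_off G FE c d hcd hGd hy]
      exact hxy

include hFEid in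
lemma FEsymm_id : ∀ x ∉ Set.Icc c d, FE.symm x = x := by
  intro x hx
  conv_lhs => rw [← hFEid x hx]
  exact FE.symm_apply_apply x

include hFEid hFEmem in
lemma FEsymm_mem : ∀ y ∈ Set.Icc c d, FE.symm y ∈ Set.Icc c d := by
  intro y hy
  by_contra h
  have := hFEid _ h
  rw [FE.apply_symm_apply] at this
  rw [← this] at h
  exact h hy

include hFEid hFEmem in
lemma F1_surjective : Surjective (F1fun G FE c d) := by
  intro y
  by_cases hy : ∃ n, y ∈ P G c d n
  · obtain ⟨n, hyn⟩ := hy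
    set x := (⇑G)^[n] (FE.symm ((⇑G.symm)^[n] y)) with hxdef
    have hmem : FE.symm ((⇑G.symm)^[n] y) ∈ Set.Icc c d :=
      FEsymm_mem G FE c d hcd hGd hFEid hFEmem _ (Gsi_mem G c d hcd hGd hyn)
    have hxn : x ∈ P G c d n := ⟨(G.monotone.iterate n) hmem.1, (G.monotone.iterate n) hmem.2⟩
    refine ⟨x, ?_⟩
    rw [F1_on G FE c d hcd hGd hxn, hxdef, Gsi_Gi, FE.apply_symm_apply, Gi_Gsi]
  · push_neg at hy
    exact ⟨y, F1_off G FE c d hcd hGd hy⟩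

include hFEid hFEmem in
lemma F1_commutator : ∀ y : ℝ,
    G (F1fun G FE c d (G.symm y)) = FE.symm (F1fun G FE c d y) := by
  intro y
  by_cases hy : ∃ n, y ∈ P G c d n
  · obtain ⟨n, hyn⟩ := hy
    rcases n with _ | n
    · -- y ∈ P 0 = [c,d]
      have hy0 : y ∈ Set.Icc c d := by simpa [P] using hyn
      have hGs : d < G.symm y := by
        have : G d < y := lt_of_lt_of_le hGd hy0.1
        have := G.symm.strictMono this
        rwa [G.symm_apply_apply] at this
      have hoff : ∀ n, G.symm y ∉ P G c d n := by
        intro n hn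
        have : G.symm y ≤ d := le_trans hn.2 (seq_anti G c d hcd hGd 0 n (Nat.zero_le n))
        linarith
      rw [F1_off G FE c d hcd hGd hoff, G.apply_symm_apply]
      rw [F1_on G FE c d hcd hGd hyn]
      simp only [Function.iterate_zero, id_eq]
      rw [FE.symm_apply_apply]
    · -- y ∈ P (n+1)
      have hmem : G.symm y ∈ P G c d n := by
        constructor
        · have := G.symm.monotone hyn.1
          rwa [Function.iterate_succ_apply', G.symm_apply_apply] at this
        · have := G.symm.monotone hyn.2
          rwa [Function.iterate_succ_apply', G.symm_apply_apply] at this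
      rw [F1_on G FE c d hcd hGd hmem]
      have h1 : (⇑G.symm)^[n] (G.symm y) = (⇑G.symm)^[n+1] y :=
        (Function.iterate_succ_apply (⇑G.symm) n y).symm
      rw [h1, ← Function.iterate_succ_apply' (⇑G)]
      rw [← F1_on G FE c d hcd hGd hyn]
      have hnot : F1fun G FE c d y ∉ Set.Icc c d := by
        intro hmem'
        have h0 : F1fun G FE c d y ∈ P G c d 0 := by simpa [P] using hmem'
        have := piece_uniq G c d hcd hGd (F1_mem G FE c d hcd hGd hFEmem hyn) h0
        exact Nat.succ_ne_zero n this
      rw [FEsymm_id G FE c d hcd hGd hFEid _ hnot]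
  · push_neg at hy
    have hoff : ∀ n, G.symm y ∉ P G c d n := by
      intro n hn
      apply hy (n+1)
      constructor
      · have := G.monotone hn.1
        rwa [← Function.iterate_succ_apply' (⇑G), G.apply_symm_apply] at this
      · have := G.monotone hn.2
        rwa [← Function.iterate_succ_apply' (⇑G), G.apply_symm_apply] at this
    rw [F1_off G FE c d hcd hGd hoff, G.apply_symm_apply, F1_off G FE c d hcd hGd hy]
    have : y ∉ Set.Icc c d := by
      intro h
      exact hy 0 (by simpa [P] using h)
    rw [FEsymm_id G FE c d hcd hGd hFEid _ this]

/-- the swindle as an order isomorphism. -/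
def F1iso : ℝ ≃o ℝ :=
  StrictMono.orderIsoOfSurjective _ (F1_strictMono G FE c d hcd hGd hFEmem)
    (F1_surjective G FE c d hcd hGd hFEid hFEmem)

lemma F1iso_coe : ⇑(F1iso G FE c d hcd hGd hFEid hFEmem) = F1fun G FE c d := rfl

include hFEid hFEmem in
lemma commutator_eq : ∀ x : ℝ,
    (F1iso G FE c d hcd hGd hFEid hFEmem)
      (G ((F1iso G FE c d hcd hGd hFEid hFEmem).symm (G.symm x))) = FE x := by
  intro x
  set Φ := F1iso G FE c d hcd hGd hFEid hFEmem with hΦ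
  have key := F1_commutator G FE c d hcd hGd hFEid hFEmem (G (Φ.symm (G.symm x)))
  rw [G.symm_apply_apply] at key
  have hΦcoe : ∀ z, F1fun G FE c d z = Φ z := fun z => rfl
  rw [hΦcoe, hΦcoe, Φ.apply_symm_apply, G.apply_symm_apply] at key
  -- key : x = FE.symm (Φ (G (Φ.symm (G.symm x))))
  have h2 := congrArg FE key
  rw [FE.apply_symm_apply] at h2
  exact h2.symm

include hFEid hFEmem in
lemma F1_id_outside {a b : ℝ} (hGid : ∀ x ∉ Set.Ioo a b, G x = x)
    (hac : a < c) (hdb : d < b) :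
    ∀ x ∉ Set.Ioo a b, (F1iso G FE c d hcd hGd hFEid hFEmem) x = x := by
  have ha_lt : ∀ z, a < z → a < G z := by
    intro z hz
    by_cases h : z ∈ Set.Ioo a b
    · have ha : G a = a := hGid a (by simp)
      have := G.strictMono hz
      rwa [ha] at this
    · rwa [hGid z h]
  have hPa : ∀ n, a < (⇑G)^[n] c := by
    intro n
    induction n with
    | zero => simpa using hac
    | succ n ih =>
      rw [Function.iterate_succ_apply']
      exact ha_lt _ ih
  have hPb : ∀ n, (⇑G)^[n] d < b := fun n =>
    lt_of_le_of_lt (seq_anti G c d hcd hGd 0 n (Nat.zero_le n)) hdb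
  intro x hx
  rw [F1iso_coe]
  refine F1_off G FE c d hcd hGd ?_
  intro n hn
  apply hx
  exact ⟨lt_of_lt_of_le (hPa n) hn.1, lt_of_le_of_lt hn.2 (hPb n)⟩

end Core

section Gmap
variable (a b c d : ℝ)

/-- A piecewise-linear increasing bijection of ℝ, identity outside `[a,b]`,
mapping `d` strictly below `c`. -/
def gmap : ℝ → ℝ := fun x =>
  min x (max (a + (x - a) * (((a+c)/2 - a)/(d - a))) ((a+c)/2 + (x - d) * ((b - (a+c)/2)/(b - d))))

variable (hac : a < c) (hcd : c ≤ d) (hdb : d < b)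
include hac hcd hdb

lemma gmap_strictMono : StrictMono (gmap a b c d) := by
  have hk1 : 0 < ((a+c)/2 - a)/(d - a) := by
    apply div_pos <;> linarith
  have hk2 : 0 < (b - (a+c)/2)/(b - d) := by
    apply div_pos <;> linarith
  have h1 : StrictMono (fun x : ℝ => a + (x - a) * (((a+c)/2 - a)/(d - a))) := by
    intro x y h; dsimp only; nlinarith
  have h2 : StrictMono (fun x : ℝ => (a+c)/2 + (x - d) * ((b - (a+c)/2)/(b - d))) := by
    intro x y h; dsimp only; nlinarith
  intro x y h
  exact min_lt_min h (max_lt_max (h1 h) (h2 h))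

lemma gmap_id : ∀ x ∉ Set.Ioo a b, gmap a b c d x = x := by
  intro x hx
  have hk1 : ((a+c)/2 - a)/(d - a) < 1 := by
    rw [div_lt_one (by linarith)]; linarith
  have hk1' : 0 < ((a+c)/2 - a)/(d - a) := by apply div_pos <;> linarith
  have hk2 : 1 < (b - (a+c)/2)/(b - d) := by
    rw [lt_div_iff₀ (by linarith)]; linarith
  rcases le_or_gt x a with h | h
  · apply min_eq_left
    apply le_max_of_le_left
    nlinarith
  · have h' : b ≤ x := by
      by_contra hb
      push_neg at hb
      exact hx ⟨h, hb⟩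
    apply min_eq_left
    apply le_max_of_le_right
    have key : x - (a+c)/2 ≤ (x - d) * ((b - (a+c)/2)/(b - d)) := by
      rw [mul_div_assoc', le_div_iff₀ (by linarith)]
      nlinarith
    linarith

lemma gmap_d_lt : gmap a b c d d < c := by
  have h1 : a + (d - a) * (((a+c)/2 - a)/(d - a)) = (a+c)/2 := by
    have hda : d - a ≠ 0 := by intro h; rw [sub_eq_zero] at h; subst h; linarith
    field_simp
    ring
  have h2 : (a+c)/2 + (d - d) * ((b - (a+c)/2)/(b - d)) = (a+c)/2 := by ring
  have : gmap a b c d d = min d ((a+c)/2) := by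
    rw [gmap, h1, h2, max_self]
  rw [this]
  have : (a+c)/2 < c := by linarith
  rcases min_cases d ((a+c)/2) with ⟨h, _⟩ | ⟨h, _⟩ <;> rw [h] <;> linarith

lemma gmap_continuous : Continuous (gmap a b c d) := by
  unfold gmap
  fun_prop

lemma gmap_surjective : Surjective (gmap a b c d) := by
  intro y
  by_cases hy : y ∈ Set.Ioo a b
  · have hga : gmap a b c d a = a := gmap_id a b c d hac hcd hdb a (by simp)
    have hgb : gmap a b c d b = b := gmap_id a b c d hac hcd hdb b (by simp)
    have := intermediate_value_Icc (le_of_lt (lt_trans (lt_of_lt_of_le hac hcd) hdb))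
      (gmap_continuous a b c d hac hcd hdb).continuousOn
    have hmem : y ∈ Set.Icc (gmap a b c d a) (gmap a b c d b) := by
      rw [hga, hgb]; exact ⟨le_of_lt hy.1, le_of_lt hy.2⟩
    obtain ⟨x, _, hx⟩ := this hmem
    exact ⟨x, hx⟩
  · exact ⟨y, gmap_id a b c d hac hcd hdb y hy⟩

/-- `gmap` as an order isomorphism. -/
def gIso : ℝ ≃o ℝ :=
  StrictMono.orderIsoOfSurjective _ (gmap_strictMono a b c d hac hcd hdb)
    (gmap_surjective a b c d hac hcd hdb)

lemma gIso_coe : ⇑(gIso a b c d hac hcd hdb) = gmap a b c d := rfl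

end Gmap

section Lift
variable (a b c d : ℝ) (f : S1 ≃ₜ S1)

/-- The canonical lift of `f` to `ℝ`, identity outside `(a,b)`. -/
def Fm : ℝ → ℝ := fun x => if x ∈ Set.Ioo a b then coord a (f (pr x)) else x

variable (hab : a < b) (hb1 : b < a+1) (hac : a < c) (hcd : c ≤ d) (hdb : d < b)
variable (hmoved : ∀ θ : S1, f θ ≠ θ → ∃ x ∈ Set.Icc c d, θ = pr x)

include hab hb1 hac hcd hdb hmoved

lemma Ioo_sub_Ico : Set.Ioo a b ⊆ Set.Ico a (a+1) := fun x hx =>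
  ⟨le_of_lt hx.1, by linarith [hx.2]⟩

lemma Icc_sub_Ioo : Set.Icc c d ⊆ Set.Ioo a b := fun x hx =>
  ⟨lt_of_lt_of_le hac hx.1, lt_of_le_of_lt hx.2 hdb⟩

lemma Fm_cases : ∀ x ∈ Set.Ioo a b,
    (Fm a b f x = x ∧ f (pr x) = pr x) ∨
    (Fm a b f x ∈ Set.Icc c d ∧ pr (Fm a b f x) = f (pr x)) := by
  intro x hx
  have hxm : x ∈ Set.Ico a (a+1) := Ioo_sub_Ico a b c d f hab hb1 hac hcd hdb hmoved hx
  by_cases hf : f (pr x) = pr x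
  · left
    constructor
    · rw [Fm, if_pos hx, hf, coord_pr a hxm]
    · exact hf
  · right
    have hne : f (f (pr x)) ≠ f (pr x) := fun h => hf (f.injective h)
    obtain ⟨y, hy, hθ⟩ := hmoved (f (pr x)) hne
    have hym : y ∈ Set.Ico a (a+1) :=
      Ioo_sub_Ico a b c d f hab hb1 hac hcd hdb hmoved
        (Icc_sub_Ioo a b c d f hab hb1 hac hcd hdb hmoved hy)
    have : Fm a b f x = y := by rw [Fm, if_pos hx, hθ, coord_pr a hym]
    rw [this]
    exact ⟨hy, hθ.symm⟩

lemma Fm_id_Ioo : ∀ x ∉ Set.Ioo a b, Fm a b f x = x := fun x hx => if_neg hx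

lemma Fm_id_Icc : ∀ x ∉ Set.Icc c d, Fm a b f x = x := by
  intro x hx
  by_cases hxab : x ∈ Set.Ioo a b
  · have hxm : x ∈ Set.Ico a (a+1) := Ioo_sub_Ico a b c d f hab hb1 hac hcd hdb hmoved hxab
    by_cases hf : f (pr x) = pr x
    · rw [Fm, if_pos hxab, hf, coord_pr a hxm]
    · obtain ⟨y, hy, hθ⟩ := hmoved (pr x) hf
      have hym : y ∈ Set.Ico a (a+1) :=
        Ioo_sub_Ico a b c d f hab hb1 hac hcd hdb hmoved
          (Icc_sub_Ioo a b c d f hab hb1 hac hcd hdb hmoved hy)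
      have : x = y := (AddCircle.coe_eq_coe_iff_of_mem_Ico hxm hym).mp hθ
      exact absurd (this ▸ hy) hx
  · exact Fm_id_Ioo a b c d f hab hb1 hac hcd hdb hmoved x hxab

lemma Fm_mem : ∀ x ∈ Set.Icc c d, Fm a b f x ∈ Set.Icc c d := by
  intro x hx
  rcases Fm_cases a b c d f hab hb1 hac hcd hdb hmoved x
      (Icc_sub_Ioo a b c d f hab hb1 hac hcd hdb hmoved hx) with ⟨h1, _⟩ | ⟨h1, _⟩
  · rwa [h1]
  · exact h1

lemma Fm_pr : ∀ x ∈ Set.Ico a (a+1), pr (Fm a b f x) = f (pr x) := by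
  intro x hxm
  by_cases hxab : x ∈ Set.Ioo a b
  · rcases Fm_cases a b c d f hab hb1 hac hcd hdb hmoved x hxab with ⟨h1, h2⟩ | ⟨_, h2⟩
    · rw [h1]; exact h2.symm
    · exact h2
  · rw [Fm_id_Ioo a b c d f hab hb1 hac hcd hdb hmoved x hxab]
    by_contra hf
    have hf' : f (pr x) ≠ pr x := fun h => hf h.symm
    obtain ⟨y, hy, hθ⟩ := hmoved (pr x) hf'
    have hym : y ∈ Set.Ico a (a+1) :=
      Ioo_sub_Ico a b c d f hab hb1 hac hcd hdb hmoved
        (Icc_sub_Ioo a b c d f hab hb1 hac hcd hdb hmoved hy)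
    have : x = y := (AddCircle.coe_eq_coe_iff_of_mem_Ico hxm hym).mp hθ
    exact hxab (this ▸ Icc_sub_Ioo a b c d f hab hb1 hac hcd hdb hmoved hy)

lemma hmoved_symm : ∀ θ : S1, f.symm θ ≠ θ → ∃ x ∈ Set.Icc c d, θ = pr x := by
  intro θ h
  refine hmoved θ (fun hf => h ?_)
  exact f.toEquiv.symm_apply_eq.mpr hf.symm

lemma Fm_left_inv : ∀ x, Fm a b f.symm (Fm a b f x) = x := by
  intro x
  by_cases hx : x ∈ Set.Ioo a b
  · have hxm : x ∈ Set.Ico a (a+1) := Ioo_sub_Ico a b c d f hab hb1 hac hcd hdb hmoved hx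
    rcases Fm_cases a b c d f hab hb1 hac hcd hdb hmoved x hx with ⟨h1, h2⟩ | ⟨h1, h2⟩
    · rw [h1, Fm, if_pos hx]
      have : f.symm (pr x) = pr x := by
        conv_lhs => rw [← h2]
        exact f.symm_apply_apply (pr x)
      rw [this, coord_pr a hxm]
    · have hmem : Fm a b f x ∈ Set.Ioo a b := Icc_sub_Ioo a b c d f hab hb1 hac hcd hdb hmoved h1
      rw [Fm, if_pos hmem, h2, f.symm_apply_apply, coord_pr a hxm]
  · rw [Fm_id_Ioo a b c d f hab hb1 hac hcd hdb hmoved x hx,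
      Fm_id_Ioo a b c d f.symm hab hb1 hac hcd hdb
        (hmoved_symm a b c d f hab hb1 hac hcd hdb hmoved) x hx]

lemma Fm_right_inv : ∀ x, Fm a b f (Fm a b f.symm x) = x := by
  have := Fm_left_inv a b c d f.symm hab hb1 hac hcd hdb
    (hmoved_symm a b c d f hab hb1 hac hcd hdb hmoved)
  simpa [Homeomorph.symm_symm] using this

lemma Fm_continuous : Continuous (Fm a b f) := by
  rw [continuous_iff_continuousAt]
  intro x
  by_cases hx : x ∈ Set.Ioo a b
  · have hxm : x ∈ Set.Ico a (a+1) := Ioo_sub_Ico a b c d f hab hb1 hac hcd hdb hmoved hx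
    have hne : f (pr x) ≠ pr a := by
      rcases Fm_cases a b c d f hab hb1 hac hcd hdb hmoved x hx with ⟨_, h2⟩ | ⟨h1, h2⟩
      · rw [h2]
        intro h
        have : x = a := (AddCircle.coe_eq_coe_iff_of_mem_Ico hxm
          ⟨le_refl a, by linarith⟩).mp h
        exact absurd (this ▸ hx) (by simp [Set.mem_Ioo])
      · rw [← h2]
        intro h
        have h1' := Icc_sub_Ioo a b c d f hab hb1 hac hcd hdb hmoved h1
        have : Fm a b f x = a := (AddCircle.coe_eq_coe_iff_of_mem_Ico
          (Ioo_sub_Ico a b c d f hab hb1 hac hcd hdb hmoved h1')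
          ⟨le_refl a, by linarith⟩).mp h
        exact absurd (this ▸ h1') (by simp [Set.mem_Ioo])
    have hc1 : ContinuousAt (⇑f ∘ pr) x := (f.continuous.comp continuous_pr).continuousAt
    have hcont : ContinuousAt ((coord a) ∘ (⇑f ∘ pr)) x :=
      ContinuousAt.comp (coord_continuousAt a hne) hc1
    refine hcont.congr ?_
    filter_upwards [isOpen_Ioo.mem_nhds hx] with y hy
    rw [Fm, if_pos hy]
    rfl
  · have hx' : x ∉ Set.Icc c d := fun h =>
      hx (Icc_sub_Ioo a b c d f hab hb1 hac hcd hdb hmoved h)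
    have hopen : IsOpen (Set.Icc c d)ᶜ := isClosed_Icc.isOpen_compl
    refine (continuousAt_id).congr ?_
    filter_upwards [hopen.mem_nhds hx'] with y hy
    rw [Fm_id_Icc a b c d f hab hb1 hac hcd hdb hmoved y hy]
    rfl

lemma Fm_strictMono : StrictMono (Fm a b f) := by
  have hinj : Function.Injective (Fm a b f) :=
    Function.LeftInverse.injective (Fm_left_inv a b c d f hab hb1 hac hcd hdb hmoved)
  refine Continuous.strictMonoOn_of_inj_rigidity
    (Fm_continuous a b c d f hab hb1 hac hcd hdb hmoved) hinj
    (show b < b + 1 by linarith) ?_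
  intro x hx y hy hxy
  rw [Fm_id_Ioo a b c d f hab hb1 hac hcd hdb hmoved x (fun h => absurd hx.1 (not_le.mpr h.2)),
    Fm_id_Ioo a b c d f hab hb1 hac hcd hdb hmoved y (fun h => absurd hy.1 (not_le.mpr h.2))]
  exact hxy

lemma Fm_surjective : Surjective (Fm a b f) := fun y =>
  ⟨Fm a b f.symm y, Fm_right_inv a b c d f hab hb1 hac hcd hdb hmoved y⟩

/-- The lift as an order isomorphism. -/
def FmIso : ℝ ≃o ℝ :=
  StrictMono.orderIsoOfSurjective _ (Fm_strictMono a b c d f hab hb1 hac hcd hdb hmoved)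
    (Fm_surjective a b c d f hab hb1 hac hcd hdb hmoved)

end Lift

end Stmt13Aux

open Stmt13Aux Set Function in
/-- Any homeomorphism of the circle supported in the interior of a proper closed interval
`I = pr([a,b])` (with `b - a < 1`) is a commutator `f = f₁ f₂ f₁⁻¹ f₂⁻¹` of two
homeomorphisms supported in `I`. -/
theorem stmt13 (a b : ℝ) (hab : a < b) (hlen : b - a < 1)
    (f : S1 ≃ₜ S1) (hsupp : closure {θ : S1 | f θ ≠ θ} ⊆ pr '' Set.Ioo a b) :
    ∃ f1 f2 : S1 ≃ₜ S1,
      closure {θ : S1 | f1 θ ≠ θ} ⊆ pr '' Set.Icc a b ∧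
      closure {θ : S1 | f2 θ ≠ θ} ⊆ pr '' Set.Icc a b ∧
      ∀ θ : S1, f θ = f1 (f2 (f1.symm (f2.symm θ))) := by
  classical
  have hb1 : b < a + 1 := by linarith
  set K : Set S1 := closure {θ : S1 | f θ ≠ θ} with hKdef
  have hKcomp : IsCompact K := isClosed_closure.isCompact
  have hKco : ∀ θ ∈ K, coord a θ ∈ Set.Ioo a b := by
    intro θ hθ
    obtain ⟨y, hy, hyθ⟩ := hsupp hθ
    have hym : y ∈ Set.Ico a (a+1) := ⟨le_of_lt hy.1, by linarith [hy.2]⟩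
    rw [← hyθ, coord_pr a hym]
    exact hy
  have hKcont : ContinuousOn (coord a) K := by
    intro θ hθ
    apply ContinuousAt.continuousWithinAt
    apply coord_continuousAt
    obtain ⟨y, hy, hyθ⟩ := hsupp hθ
    have hym : y ∈ Set.Ico a (a+1) := ⟨le_of_lt hy.1, by linarith [hy.2]⟩
    rw [← hyθ]
    intro h
    have : y = a := (AddCircle.coe_eq_coe_iff_of_mem_Ico hym
      ⟨le_refl a, by linarith⟩).mp h
    rw [this] at hy
    exact lt_irrefl a hy.1
  set K' : Set ℝ := coord a '' K ∪ {(a+b)/2} with hK'def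
  have hK'comp : IsCompact K' :=
    (hKcomp.image_of_continuousOn hKcont).union isCompact_singleton
  have hK'sub : K' ⊆ Set.Ioo a b := by
    rintro x (⟨θ, hθ, rfl⟩ | hx)
    · exact hKco θ hθ
    · rw [Set.mem_singleton_iff] at hx
      rw [hx]
      constructor <;> [linarith; linarith]
  have hK'ne : K'.Nonempty := ⟨(a+b)/2, Or.inr rfl⟩
  set c := sInf K' with hcdef
  set d := sSup K' with hddef
  have hcK : c ∈ K' := hK'comp.sInf_mem hK'ne
  have hdK : d ∈ K' := hK'comp.sSup_mem hK'ne
  have hac : a < c := (hK'sub hcK).1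
  have hdb : d < b := (hK'sub hdK).2
  have hcd : c ≤ d := csInf_le_csSup hK'ne hK'comp.bddBelow hK'comp.bddAbove
  have hmoved : ∀ θ : S1, f θ ≠ θ → ∃ x ∈ Set.Icc c d, θ = pr x := by
    intro θ hθ
    have hθK : θ ∈ K := subset_closure hθ
    refine ⟨coord a θ, ⟨?_, ?_⟩, (pr_coord a θ).symm⟩
    · exact csInf_le hK'comp.bddBelow (Or.inl ⟨θ, hθK, rfl⟩)
    · exact le_csSup hK'comp.bddAbove (Or.inl ⟨θ, hθK, rfl⟩)
  -- the two building blocks on ℝ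
  set GO := gIso a b c d hac hcd hdb with hGOdef
  have hGd : GO d < c := gmap_d_lt a b c d hac hcd hdb
  have hGid : ∀ x ∉ Set.Ioo a b, GO x = x := gmap_id a b c d hac hcd hdb
  set FE := FmIso a b c d f hab hb1 hac hcd hdb hmoved with hFEdef
  have hFEid : ∀ x ∉ Set.Icc c d, FE x = x :=
    Fm_id_Icc a b c d f hab hb1 hac hcd hdb hmoved
  have hFEmem : ∀ x ∈ Set.Icc c d, FE x ∈ Set.Icc c d :=
    Fm_mem a b c d f hab hb1 hac hcd hdb hmoved
  set Φ := F1iso GO FE c d hcd hGd hFEid hFEmem with hΦdef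
  have hΦid : ∀ x ∉ Set.Ioo a b, Φ x = x :=
    F1_id_outside GO FE c d hcd hGd hFEid hFEmem hGid hac hdb
  refine ⟨descend hab hb1 Φ hΦid, descend hab hb1 GO hGid,
    descend_support hab hb1 Φ hΦid, descend_support hab hb1 GO hGid, ?_⟩
  intro θ
  set x := coord a θ with hxdef
  have hxm : x ∈ Set.Ico a (a+1) := coord_mem a θ
  have hθeq : θ = pr x := (pr_coord a θ).symm
  rw [hθeq]
  have hGsid : ∀ y ∉ Set.Ioo a b, GO.symm y = y := symm_id hab hb1 GO hGid
  have hΦsid : ∀ y ∉ Set.Ioo a b, Φ.symm y = y := symm_id hab hb1 Φ hΦid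
  have m0 : GO.symm x ∈ Set.Ico a (a+1) := maps_Ico hab hb1 GO.symm hGsid x hxm
  have m1 : Φ.symm (GO.symm x) ∈ Set.Ico a (a+1) :=
    maps_Ico hab hb1 Φ.symm hΦsid _ m0
  have m2 : GO (Φ.symm (GO.symm x)) ∈ Set.Ico a (a+1) :=
    maps_Ico hab hb1 GO hGid _ m1
  have s1 : (descend hab hb1 GO hGid).symm (pr x) = pr (GO.symm x) := by
    rw [descend_symm_apply, tilde_eq_of_mem _ hxm]
  have s2 : (descend hab hb1 Φ hΦid).symm (pr (GO.symm x)) = pr (Φ.symm (GO.symm x)) := by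
    rw [descend_symm_apply, tilde_eq_of_mem _ m0]
  have s3 : descend hab hb1 GO hGid (pr (Φ.symm (GO.symm x))) =
      pr (GO (Φ.symm (GO.symm x))) := by
    rw [descend_apply, tilde_eq_of_mem _ m1]
  have s4 : descend hab hb1 Φ hΦid (pr (GO (Φ.symm (GO.symm x)))) =
      pr (Φ (GO (Φ.symm (GO.symm x)))) := by
    rw [descend_apply, tilde_eq_of_mem _ m2]
  rw [s1, s2, s3, s4, commutator_eq GO FE c d hcd hGd hFEid hFEmem x]
  exact (Fm_pr a b c d f hab hb1 hac hcd hdb hmoved x hxm).symm
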